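/- For t > 0 define g : [0,∞) → ℝ by g(x) = Re G(i + x e^{iπ/6}) = -2t·log|i + x e^{iπ/6}| + t·Im( i + x e^{iπ/6} + (i + x e^{iπ/6})^{-1} ). Then g is differentiable on (0,∞) with g'(x) = (t/2)·( 1 - (2 + 4x)/(1 + x + x²) + (1 + 4x + x²)/(1 + x + x²)² ), this expression vanishes at x = 0, and g'(x) < 0 for all 0 < x < 1 + √3; in particular g is strictly decreasing on [0, 1 + √3], so Re G(i + x e^{iπ/6}) ≤ Re G(i) = 0 there. (Computation from the proof of Lemma 6.1 on the segment Γ_+^{(1)}.) -/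

import Mathlib

open scoped Real BigOperators

/-- `Re G(ξ)` for the spectral function `G(ξ) = -2t log ξ - it(ξ + ξ⁻¹)` (i.e. `x = -2t`). -/
noncomputable def ReG (t : ℝ) (ξ : ℂ) : ℝ :=
  -2 * t * Real.log (‖ξ‖) + t * (ξ + ξ⁻¹).im

/-- `Re H(ζ)` for the spectral function `H(ζ) = 2t log ζ - it(ζ + ζ⁻¹)` (i.e. `x = -2t`). -/
noncomputable def ReH (t : ℝ) (ζ : ℂ) : ℝ :=
  2 * t * Real.log (‖ζ‖) + t * (ζ + ζ⁻¹).im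

/-- The steep descent contour `Γ₊` built with radius `R`. -/
def GammaPlus (R : ℝ) : Set ℂ :=
  ({z | ∃ x : ℝ, 0 ≤ x ∧ z = Complex.I + (x : ℂ) * Complex.exp (Complex.I * ((Real.pi : ℂ) / 6))}
      ∩ Metric.closedBall Complex.I 1) ∪
  ({z | ∃ x : ℝ, 0 ≤ x ∧ z = Complex.I + (x : ℂ) * Complex.exp (Complex.I * (5 * (Real.pi : ℂ) / 6))}
      ∩ Metric.closedBall Complex.I 1) ∪
  (({z | ∃ x : ℝ, 0 ≤ x ∧ z = Complex.I + Complex.exp (Complex.I * ((Real.pi : ℂ) / 6)) + (x : ℂ)}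
      \ Metric.ball Complex.I 1) ∩ Metric.closedBall 0 R) ∪
  (({z | ∃ x : ℝ, 0 ≤ x ∧ z = Complex.I + Complex.exp (Complex.I * (5 * (Real.pi : ℂ) / 6)) - (x : ℂ)}
      \ Metric.ball Complex.I 1) ∩ Metric.closedBall 0 R) ∪
  {z | ‖z‖ = R ∧ z.im ≤ 3 / 2}

/-- The steep descent contour `Γ₋` built with radius `R`: the mirror image of `Γ₊`
across the real axis. -/
def GammaMinus (R : ℝ) : Set ℂ :=
  (fun z => (starRingEnd ℂ) z) '' GammaPlus R

lemma stmt16_harg : Complex.I * ((Real.pi : ℂ) / 6) = ((Real.pi / 6 : ℝ) : ℂ) * Complex.I := by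
  push_cast; ring

lemma stmt16_xi_re (x : ℝ) :
    (Complex.I + (x : ℂ) * Complex.exp (Complex.I * ((Real.pi : ℂ) / 6))).re
      = x * (Real.sqrt 3 / 2) := by
  rw [stmt16_harg, Complex.add_re, Complex.mul_re, Complex.exp_ofReal_mul_I_re,
    Complex.exp_ofReal_mul_I_im, Real.cos_pi_div_six, Real.sin_pi_div_six]
  simp

lemma stmt16_xi_im (x : ℝ) :
    (Complex.I + (x : ℂ) * Complex.exp (Complex.I * ((Real.pi : ℂ) / 6))).im
      = 1 + x / 2 := by
  rw [stmt16_harg, Complex.add_im, Complex.mul_im, Complex.exp_ofReal_mul_I_re,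
    Complex.exp_ofReal_mul_I_im, Real.cos_pi_div_six, Real.sin_pi_div_six]
  simp
  ring

lemma stmt16_xi_normSq (x : ℝ) :
    Complex.normSq (Complex.I + (x : ℂ) * Complex.exp (Complex.I * ((Real.pi : ℂ) / 6)))
      = 1 + x + x ^ 2 := by
  rw [Complex.normSq_apply, stmt16_xi_re, stmt16_xi_im]
  have h3 : Real.sqrt 3 ^ 2 = 3 := Real.sq_sqrt (by norm_num)
  nlinarith [h3]

lemma stmt16_Qpos (x : ℝ) : (0:ℝ) < 1 + x + x ^ 2 := by nlinarith [sq_nonneg (x + 1/2)]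

lemma stmt16_key (t x : ℝ) :
    ReG t (Complex.I + (x : ℂ) * Complex.exp (Complex.I * ((Real.pi : ℂ) / 6)))
      = -t * Real.log (1 + x + x ^ 2) + t * (1 + x / 2)
        - t * (1 + x / 2) / (1 + x + x ^ 2) := by
  unfold ReG
  rw [Complex.add_im, Complex.inv_im, stmt16_xi_normSq, stmt16_xi_im]
  rw [Complex.norm_def, stmt16_xi_normSq, Real.log_sqrt (le_of_lt (stmt16_Qpos x))]
  field_simp
  ring

lemma stmt16_hder (t x : ℝ) :
    HasDerivAt
      (fun x : ℝ => -t * Real.log (1 + x + x ^ 2) + t * (1 + x / 2)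
        - t * (1 + x / 2) / (1 + x + x ^ 2))
      ((t / 2) * (1 - (2 + 4 * x) / (1 + x + x ^ 2)
          + (1 + 4 * x + x ^ 2) / (1 + x + x ^ 2) ^ 2)) x := by
  have hQ : (1 + x + x ^ 2) ≠ 0 := ne_of_gt (stmt16_Qpos x)
  have hq : HasDerivAt (fun x : ℝ => 1 + x + x ^ 2) (1 + 2 * x) x := by
    have := ((hasDerivAt_id x).const_add 1).add ((hasDerivAt_pow 2 x))
    exact this.congr_deriv (by norm_num)
  have h1 : HasDerivAt (fun x : ℝ => -t * Real.log (1 + x + x ^ 2))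
      (-t * ((1 + 2 * x) / (1 + x + x ^ 2))) x :=
    (hq.log hQ).const_mul (-t)
  have h2 : HasDerivAt (fun x : ℝ => t * (1 + x / 2)) (t * (1 / 2)) x := by
    have := ((hasDerivAt_id x).div_const 2).const_add 1
    exact this.const_mul t
  have h3 : HasDerivAt (fun x : ℝ => t * (1 + x / 2) / (1 + x + x ^ 2))
      ((t * (1 / 2) * (1 + x + x ^ 2) - t * (1 + x / 2) * (1 + 2 * x))
        / (1 + x + x ^ 2) ^ 2) x := h2.div hq hQ
  have := (h1.add h2).sub h3
  exact this.congr_deriv (by field_simp; ring)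

lemma stmt16_hderG (t x : ℝ) :
    HasDerivAt
      (fun x : ℝ =>
        ReG t (Complex.I + (x : ℂ) * Complex.exp (Complex.I * ((Real.pi : ℂ) / 6))))
      ((t / 2) * (1 - (2 + 4 * x) / (1 + x + x ^ 2)
          + (1 + 4 * x + x ^ 2) / (1 + x + x ^ 2) ^ 2)) x := by
  have : (fun x : ℝ =>
      ReG t (Complex.I + (x : ℂ) * Complex.exp (Complex.I * ((Real.pi : ℂ) / 6))))
      = fun x : ℝ => -t * Real.log (1 + x + x ^ 2) + t * (1 + x / 2)
        - t * (1 + x / 2) / (1 + x + x ^ 2) := funext fun x => stmt16_key t x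
  rw [this]
  exact stmt16_hder t x

lemma stmt16_sign (t x : ℝ) (ht : 0 < t) (hx : 0 < x) (hx' : x < 1 + Real.sqrt 3) :
    (t / 2) * (1 - (2 + 4 * x) / (1 + x + x ^ 2)
        + (1 + 4 * x + x ^ 2) / (1 + x + x ^ 2) ^ 2) < 0 := by
  have hQ := stmt16_Qpos x
  have heq : 1 - (2 + 4 * x) / (1 + x + x ^ 2)
        + (1 + 4 * x + x ^ 2) / (1 + x + x ^ 2) ^ 2
      = x ^ 2 * (x ^ 2 - 2 * x - 2) / (1 + x + x ^ 2) ^ 2 := by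
    field_simp
    ring
  rw [heq]
  have h3 : Real.sqrt 3 ^ 2 = 3 := Real.sq_sqrt (by norm_num)
  have hs1 : (1:ℝ) ≤ Real.sqrt 3 := by nlinarith [Real.sqrt_nonneg 3]
  have hneg : x ^ 2 - 2 * x - 2 < 0 := by nlinarith
  have hmul : x ^ 2 * (x ^ 2 - 2 * x - 2) < 0 :=
    mul_neg_of_pos_of_neg (by positivity) hneg
  exact mul_neg_of_pos_of_neg (by positivity) (div_neg_of_neg_of_pos hmul (by positivity))

theorem stmt16 (t : ℝ) (ht : 0 < t) :
    (∀ x : ℝ, 0 < x →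
      HasDerivAt
        (fun x : ℝ =>
          ReG t (Complex.I + (x : ℂ) * Complex.exp (Complex.I * ((Real.pi : ℂ) / 6))))
        ((t / 2) * (1 - (2 + 4 * x) / (1 + x + x ^ 2)
            + (1 + 4 * x + x ^ 2) / (1 + x + x ^ 2) ^ 2)) x) ∧
    ((t / 2) * (1 - (2 + 4 * (0 : ℝ)) / (1 + 0 + (0 : ℝ) ^ 2)
        + (1 + 4 * (0 : ℝ) + (0 : ℝ) ^ 2) / (1 + 0 + (0 : ℝ) ^ 2) ^ 2) = 0) ∧
    (∀ x : ℝ, 0 < x → x < 1 + Real.sqrt 3 →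
      (t / 2) * (1 - (2 + 4 * x) / (1 + x + x ^ 2)
          + (1 + 4 * x + x ^ 2) / (1 + x + x ^ 2) ^ 2) < 0) ∧
    StrictAntiOn
      (fun x : ℝ =>
        ReG t (Complex.I + (x : ℂ) * Complex.exp (Complex.I * ((Real.pi : ℂ) / 6))))
      (Set.Icc 0 (1 + Real.sqrt 3)) ∧
    (∀ x ∈ Set.Icc (0 : ℝ) (1 + Real.sqrt 3),
      ReG t (Complex.I + (x : ℂ) * Complex.exp (Complex.I * ((Real.pi : ℂ) / 6))) ≤ 0) := by
  set f : ℝ → ℝ := fun x : ℝ =>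
    ReG t (Complex.I + (x : ℂ) * Complex.exp (Complex.I * ((Real.pi : ℂ) / 6))) with hf
  have hanti : StrictAntiOn f (Set.Icc 0 (1 + Real.sqrt 3)) := by
    apply strictAntiOn_of_deriv_neg (convex_Icc _ _)
    · exact Continuous.continuousOn (continuous_iff_continuousAt.2 fun x =>
        (stmt16_hderG t x).continuousAt)
    · intro x hx
      rw [interior_Icc] at hx
      rw [(stmt16_hderG t x).deriv]
      exact stmt16_sign t x ht hx.1 hx.2
  have hf0 : f 0 = 0 := by
    rw [hf]
    simp only
    rw [stmt16_key t 0]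
    norm_num
  refine ⟨fun x _ => stmt16_hderG t x, by norm_num, fun x hx hx' => stmt16_sign t x ht hx hx',
    hanti, ?_⟩
  intro x hx
  rcases eq_or_lt_of_le hx.1 with h | h
  · rw [← hf0]; exact le_of_eq (congrArg f h.symm)
  · have hs1 : (0:ℝ) ≤ 1 + Real.sqrt 3 := by positivity
    have := hanti (Set.left_mem_Icc.2 hs1) hx h
    rw [hf0] at this
    exact le_of_lt this
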